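/- Let G be a finite simple graph and K a potential maximal clique of G. Then for any two vertices x, y ∈ K with xy not an edge of G, there exists a connected component C of G \ K such that both x and y have a neighbor in C. -/

import Mathlib

open SimpleGraph

variable {V : Type*}

/-- `C` is a connected component of `G \ K`:
nonempty, disjoint from `K`, connected, and maximal such. -/
def IsCompOf (G : SimpleGraph V) (K C : Set V) : Prop :=
  C.Nonempty ∧ Disjoint C K ∧ (G.induce C).Connected ∧
    ∀ D : Set V, C ⊆ D → Disjoint D K → (G.induce D).Connected → D = C

/-- The neighborhood of a set `C`: vertices outside `C` with a neighbor in `C`. -/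
def nbhd (G : SimpleGraph V) (C : Set V) : Set V :=
  {v | v ∉ C ∧ ∃ u ∈ C, G.Adj u v}

/-- `C` is a full component for `K` in `G`. -/
def IsFullComp (G : SimpleGraph V) (K C : Set V) : Prop :=
  IsCompOf G K C ∧ ∀ v ∈ K, ∃ u ∈ C, G.Adj u v

/-- Bouchitté–Todinca characterization of potential maximal cliques:
(a) no full component, (b) non-adjacent pairs of `K` covered by a common component. -/
def IsPMC (G : SimpleGraph V) (K : Set V) : Prop :=
  (∀ C : Set V, IsCompOf G K C → ¬ ∀ v ∈ K, ∃ u ∈ C, G.Adj u v) ∧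
  (∀ x ∈ K, ∀ y ∈ K, x ≠ y → ¬ G.Adj x y →
    ∃ C : Set V, IsCompOf G K C ∧ (∃ u ∈ C, G.Adj u x) ∧ (∃ u ∈ C, G.Adj u y))

/-- A graph is chordal if it has no induced cycle of length at least 4. -/
def IsChordal (G : SimpleGraph V) : Prop :=
  ∀ n : ℕ, 4 ≤ n → IsEmpty (SimpleGraph.cycleGraph n ↪g G)

/-- `H` is a minimal triangulation (minimal chordal completion) of `G`. -/
def IsMinimalTriangulation (G H : SimpleGraph V) : Prop :=
  G ≤ H ∧ IsChordal H ∧ ∀ H' : SimpleGraph V, G ≤ H' → H' ≤ H → IsChordal H' → H' = H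

/-- `K` is an inclusion-maximal clique of `G`. -/
def IsMaxClique (G : SimpleGraph V) (K : Set V) : Prop :=
  G.IsClique K ∧ ∀ K' : Set V, K ⊆ K' → G.IsClique K' → K' = K

/-- `K` is a potential maximal clique of `G`: a maximal clique of some minimal
triangulation of `G`. -/
def IsPMCtri (G : SimpleGraph V) (K : Set V) : Prop :=
  ∃ H : SimpleGraph V, IsMinimalTriangulation G H ∧ IsMaxClique H K

namespace PMCAux


open SimpleGraph Walk
open Fin.CommRing Fin.NatCast

variable {G : SimpleGraph V}

/-- vertices reachable from `x` by a walk avoiding `S` -/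
def walkSet (G : SimpleGraph V) (S : Set V) (x : V) : Set V :=
  {v | ∃ w : G.Walk x v, ∀ z ∈ w.support, z ∉ S}

lemma reach_induce {s : Set V} : ∀ {u v : V} (w : G.Walk u v), (∀ z ∈ w.support, z ∈ s) →
    ∀ (hu : u ∈ s) (hv : v ∈ s), (G.induce s).Reachable ⟨u, hu⟩ ⟨v, hv⟩
  | _, _, Walk.nil, _, _, _ => ⟨Walk.nil⟩
  | u, v, Walk.cons (v := b) h p, hs, hu, hv => by
    have hb : b ∈ s := hs b (by simp)
    have h1 : (G.induce s).Adj ⟨u, hu⟩ ⟨b, hb⟩ := by simpa using h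
    exact h1.reachable.trans (reach_induce p (fun z hz => hs z (by simp [hz])) hb hv)

lemma walk_out_induce {s : Set V} : ∀ {a b : ↥s} (w : (G.induce s).Walk a b),
    ∃ w' : G.Walk (a : V) (b : V), ∀ z ∈ w'.support, z ∈ s
  | a, _, Walk.nil => ⟨Walk.nil, by intro z hz; simp at hz; subst hz; exact a.2⟩
  | a, b, Walk.cons (v := c) h p => by
    obtain ⟨w', hw'⟩ := walk_out_induce p
    refine ⟨Walk.cons (by simpa using h) w', ?_⟩
    intro z hz
    simp only [Walk.support_cons, List.mem_cons] at hz
    rcases hz with rfl | hz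
    · exact a.2
    · exact hw' z hz

lemma isCompOf_walkSet (G : SimpleGraph V) (K : Set V) (v1 : V) (hv1 : v1 ∉ K) :
    IsCompOf G K (walkSet G K v1) := by
  classical
  have hv1C : v1 ∈ walkSet G K v1 := ⟨Walk.nil, by simp [hv1]⟩
  have hCK : ∀ v ∈ walkSet G K v1, v ∉ K := fun v hv => hv.choose_spec v hv.choose.end_mem_support
  have hsub : ∀ (v : V) (w : G.Walk v1 v), (∀ z ∈ w.support, z ∉ K) →
      ∀ z ∈ w.support, z ∈ walkSet G K v1 := by
    intro v w hw z hz
    exact ⟨w.takeUntil z hz, fun u hu => hw u (w.support_takeUntil_subset hz hu)⟩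
  refine ⟨⟨v1, hv1C⟩, Set.disjoint_left.2 hCK, ?_, ?_⟩
  · rw [connected_iff]
    refine ⟨?_, ⟨⟨v1, hv1C⟩⟩⟩
    rintro ⟨a, ha⟩ ⟨b, hb⟩
    obtain ⟨wa, hwa⟩ := ha
    obtain ⟨wb, hwb⟩ := hb
    exact (reach_induce wa (hsub a wa hwa) hv1C _).symm.trans
      (reach_induce wb (hsub b wb hwb) hv1C _)
  · intro D hCD hDK hDconn
    refine Set.Subset.antisymm ?_ hCD
    intro d hd
    obtain ⟨w⟩ := hDconn.preconnected ⟨v1, hCD hv1C⟩ ⟨d, hd⟩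
    obtain ⟨w', hw'⟩ := walk_out_induce w
    exact ⟨w', fun z hz => Set.disjoint_left.1 hDK (hw' z hz)⟩



lemma fin_succ_zero_of_val {m : ℕ} (d : Fin (m+2)) (hd : d.val = m+1) : d + 1 = 0 := by
  apply Fin.ext
  rw [Fin.add_def]
  simp [hd, Fin.val_one]

lemma natCast_ne_zero_of {m k : ℕ} (h1 : 0 < k) (h2 : k < m + 2) :
    ((k : ℕ) : Fin (m+2)) ≠ 0 := by
  intro h
  rw [Fin.natCast_eq_zero] at h
  have hdvd := h
  have := Nat.le_of_dvd h1 hdvd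
  omega

lemma cycle_no_embed {W : Type*} (A B S : Set W)
    (hcover : ∀ w, w ∉ S → w ∉ A → w ∈ B)
    (hBA : ∀ w, w ∈ B → w ∉ A) (hBS : ∀ w, w ∈ B → w ∉ S) (hAS : ∀ w, w ∈ A → w ∉ S)
    {m : ℕ} (hm : 2 ≤ m) (f : Fin (m+2) → W)
    (hS : ∀ i j : Fin (m+2), i ≠ j → f i ∈ S → f j ∈ S → (cycleGraph (m+2)).Adj i j)
    (hstep : ∀ i : Fin (m+2), ¬(f i ∈ A ∧ f (i+1) ∈ B) ∧ ¬(f i ∈ B ∧ f (i+1) ∈ A))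
    (i0 j0 : Fin (m+2)) (hi0 : f i0 ∈ A) (hj0 : f j0 ∈ B) : False := by
  have hstepA : ∀ i : Fin (m+2), f i ∈ A → f (i+1) ∉ S → f (i+1) ∈ A := by
    intro i hA' hS'
    by_contra hnA
    exact (hstep i).1 ⟨hA', hcover _ hS' hnA⟩
  have hstepB : ∀ i : Fin (m+2), f i ∈ B → f (i+1) ∉ S → f (i+1) ∈ B := by
    intro i hB' hS'
    refine hcover _ hS' (fun hA' => (hstep i).2 ⟨hB', hA'⟩)
  have prop : ∀ (X : Set W), (∀ i, f i ∈ X → f (i+1) ∉ S → f (i+1) ∈ X) →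
      ∀ (p : Fin (m+2)) (L : ℕ), (∀ k : ℕ, k < L → f (p + (k : Fin (m+2))) ∉ S) →
      ∀ k k' : ℕ, k ≤ k' → k' < L → f (p + (k : Fin (m+2))) ∈ X →
        f (p + (k' : Fin (m+2))) ∈ X := by
    intro X hX p L hL k k' hkk'
    induction k', hkk' using Nat.le_induction with
    | base => exact fun _ hk => hk
    | succ n hn ih =>
      intro hL1 hk
      have h1 : f (p + (n : Fin (m+2))) ∈ X := ih (by omega) hk
      have h2 : p + ((n + 1 : ℕ) : Fin (m+2)) = (p + (n : Fin (m+2))) + 1 := by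
        push_cast; ring
      rw [h2]
      exact hX _ h1 (by rw [← h2]; exact hL _ hL1)
  have hfin : ∀ (p : Fin (m+2)) (L : ℕ), (∀ k : ℕ, k < L → f (p + (k : Fin (m+2))) ∉ S) →
      (i0 - p).val < L → (j0 - p).val < L → False := by
    intro p L hL hi hj
    have hip : p + (((i0 - p).val : ℕ) : Fin (m+2)) = i0 := by
      rw [Fin.cast_val_eq_self]; ring
    have hjp : p + (((j0 - p).val : ℕ) : Fin (m+2)) = j0 := by
      rw [Fin.cast_val_eq_self]; ring
    rcases le_total (i0 - p).val (j0 - p).val with hle | hle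
    · have h := prop A hstepA p L hL _ _ hle hj (by rw [hip]; exact hi0)
      rw [hjp] at h
      exact hBA _ hj0 h
    · have h := prop B hstepB p L hL _ _ hle hi (by rw [hjp]; exact hj0)
      rw [hip] at h
      exact hBA _ h hi0
  have hadj_iff : ∀ i j : Fin (m+2), (cycleGraph (m+2)).Adj i j → i = j + 1 ∨ j = i + 1 := by
    intro i j h
    rw [cycleGraph_adj] at h
    rcases h with h | h
    · exact Or.inl ((eq_add_of_sub_eq h).trans (add_comm 1 j))
    · exact Or.inr ((eq_add_of_sub_eq h).trans (add_comm 1 i))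
  by_cases hT0 : ∀ i, f i ∉ S
  · exact hfin 0 (m+2) (fun k _ => hT0 _) (i0 - 0).isLt (j0 - 0).isLt
  push_neg at hT0
  obtain ⟨t0, ht0⟩ := hT0
  by_cases hT1 : ∀ i, f i ∈ S → i = t0
  · -- exactly one S vertex
    refine hfin (t0 + 1) (m+1) ?_ ?_ ?_
    · intro k hk hfS
      have heq := hT1 _ hfS
      have h1 : ((k+1 : ℕ) : Fin (m+2)) = 0 := by
        have h2 : ((k+1 : ℕ) : Fin (m+2)) = (t0 + 1 + (k : Fin (m+2))) - t0 := by
          push_cast; ring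
        rw [h2, heq, sub_self]
      exact natCast_ne_zero_of (by omega) (by omega) h1
    · have hne : i0 ≠ t0 := fun h => hAS _ hi0 (h ▸ ht0)
      by_contra hcon
      push_neg at hcon
      have hlt := (i0 - (t0+1)).isLt
      have hval : (i0 - (t0+1)).val = m+1 := by omega
      have h1 := fin_succ_zero_of_val _ hval
      have h2 : i0 - t0 = 0 := by rw [← h1]; ring
      exact hne (by rwa [sub_eq_zero] at h2)
    · have hne : j0 ≠ t0 := fun h => hBS _ hj0 (h ▸ ht0)
      by_contra hcon
      push_neg at hcon
      have hlt := (j0 - (t0+1)).isLt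
      have hval : (j0 - (t0+1)).val = m+1 := by omega
      have h1 := fin_succ_zero_of_val _ hval
      have h2 : j0 - t0 = 0 := by rw [← h1]; ring
      exact hne (by rwa [sub_eq_zero] at h2)
  · -- two S vertices
    push_neg at hT1
    obtain ⟨t1, ht1S, ht1ne⟩ := hT1
    obtain ⟨t, htS, htS1⟩ : ∃ t, f t ∈ S ∧ f (t+1) ∈ S := by
      rcases hadj_iff _ _ (hS t1 t0 ht1ne ht1S ht0) with h | h
      · exact ⟨t0, ht0, by rw [← h]; exact ht1S⟩
      · exact ⟨t1, ht1S, by rw [← h]; exact ht0⟩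
    have huniq : ∀ i, f i ∈ S → i = t ∨ i = t + 1 := by
      intro i hiS
      by_contra hcon
      push_neg at hcon
      obtain ⟨h1, h2⟩ := hcon
      have ha1 : t = i + 1 := (hadj_iff _ _ (hS i t (fun h => h1 h) hiS htS)).resolve_left h2
      have ha2 : i = t + 1 + 1 := by
        rcases hadj_iff _ _ (hS i (t+1) (fun h => h2 h) hiS htS1) with h | h
        · exact h
        · exact absurd (add_right_cancel h).symm h1
      have h3 : t + ((3 : ℕ) : Fin (m+2)) = t + 0 := by
        rw [add_zero]
        nth_rewrite 2 [ha1]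
        rw [ha2]; push_cast; ring
      exact natCast_ne_zero_of (by omega) (by omega) (add_left_cancel h3)
    refine hfin (t + 1 + 1) m ?_ ?_ ?_
    · intro k hk hfS
      rcases huniq _ hfS with h | h
      · have h1 : ((k+2 : ℕ) : Fin (m+2)) = 0 := by
          have h2 : ((k+2 : ℕ) : Fin (m+2)) = (t + 1 + 1 + (k : Fin (m+2))) - t := by
            push_cast; ring
          rw [h2, h, sub_self]
        exact natCast_ne_zero_of (by omega) (by omega) h1
      · have h1 : ((k+1 : ℕ) : Fin (m+2)) = 0 := by
          have h2 : ((k+1 : ℕ) : Fin (m+2)) = (t + 1 + 1 + (k : Fin (m+2))) - (t + 1) := by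
            push_cast; ring
          rw [h2, h, sub_self]
        exact natCast_ne_zero_of (by omega) (by omega) h1
    · have hne1 : i0 ≠ t := fun h => hAS _ hi0 (h ▸ htS)
      have hne2 : i0 ≠ t + 1 := fun h => hAS _ hi0 (h ▸ htS1)
      by_contra hcon
      push_neg at hcon
      have hlt := (i0 - (t+1+1)).isLt
      rcases (by omega : (i0 - (t+1+1)).val = m+1 ∨ (i0 - (t+1+1)).val = m) with hval | hval
      · have h1 := fin_succ_zero_of_val _ hval
        have h2 : i0 - (t+1) = 0 := by rw [← h1]; ring
        exact hne2 (by rwa [sub_eq_zero] at h2)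
      · have hval2 : (i0 - (t+1+1) + 1).val = m+1 := by
          rw [Fin.add_def, Fin.val_one, hval]
          exact Nat.mod_eq_of_lt (by omega)
        have h1 := fin_succ_zero_of_val _ hval2
        have h2 : i0 - t = 0 := by rw [← h1]; ring
        exact hne1 (by rwa [sub_eq_zero] at h2)
    · have hne1 : j0 ≠ t := fun h => hBS _ hj0 (h ▸ htS)
      have hne2 : j0 ≠ t + 1 := fun h => hBS _ hj0 (h ▸ htS1)
      by_contra hcon
      push_neg at hcon
      have hlt := (j0 - (t+1+1)).isLt
      rcases (by omega : (j0 - (t+1+1)).val = m+1 ∨ (j0 - (t+1+1)).val = m) with hval | hval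
      · have h1 := fin_succ_zero_of_val _ hval
        have h2 : j0 - (t+1) = 0 := by rw [← h1]; ring
        exact hne2 (by rwa [sub_eq_zero] at h2)
      · have hval2 : (j0 - (t+1+1) + 1).val = m+1 := by
          rw [Fin.add_def, Fin.val_one, hval]
          exact Nat.mod_eq_of_lt (by omega)
        have h1 := fin_succ_zero_of_val _ hval2
        have h2 : j0 - t = 0 := by rw [← h1]; ring
        exact hne1 (by rwa [sub_eq_zero] at h2)



/-- `H` with all edges between `A` and `B` removed. -/
def sideRestrict (H : SimpleGraph V) (A B : Set V) : SimpleGraph V where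
  Adj u v := H.Adj u v ∧ ¬(u ∈ A ∧ v ∈ B) ∧ ¬(u ∈ B ∧ v ∈ A)
  symm := ⟨by
    rintro u v ⟨h1, h2, h3⟩
    exact ⟨h1.symm, fun hc => h3 ⟨hc.2, hc.1⟩, fun hc => h2 ⟨hc.2, hc.1⟩⟩⟩
  loopless := ⟨fun v hv => H.loopless.irrefl v hv.1⟩

lemma main_case2 (G H : SimpleGraph V) (K : Set V) (hGH : G ≤ H) (hHchordal : IsChordal H)
    (hmin : ∀ H' : SimpleGraph V, G ≤ H' → H' ≤ H → IsChordal H' → H' = H)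
    (hKclique : H.IsClique K)
    {x y : V} (hx : x ∈ K) (hy : y ∈ K) (hxy : x ≠ y) (hnadj : ¬ G.Adj x y)
    (hyA : y ∉ walkSet G (K \ {x, y}) x) : False := by
  set S : Set V := K \ {x, y} with hSdef
  set A : Set V := walkSet G S x with hAdef
  have hxS : x ∉ S := fun h => h.2 (Or.inl rfl)
  have hyS : y ∉ S := fun h => h.2 (Or.inr rfl)
  have hxA : x ∈ A := ⟨Walk.nil, by intro z hz; simp at hz; subst hz; exact hxS⟩
  have hAS : ∀ v, v ∈ A → v ∉ S := fun v hv => hv.choose_spec v hv.choose.end_mem_support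
  set B : Set V := {v | v ∉ S ∧ v ∉ A} with hBdef
  set H' : SimpleGraph V := sideRestrict H A B with hH'def
  have hG'le : G ≤ H' := by
    intro u v huv
    refine ⟨hGH huv, ?_, ?_⟩
    · rintro ⟨huA, hvB⟩
      obtain ⟨w, hw⟩ := huA
      refine hvB.2 ⟨w.concat huv, ?_⟩
      intro z hz
      simp only [Walk.support_concat, List.concat_eq_append, List.mem_append, List.mem_singleton] at hz
      rcases hz with hz | rfl
      · exact hw z hz
      · exact hvB.1
    · rintro ⟨huB, hvA⟩
      obtain ⟨w, hw⟩ := hvA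
      refine huB.2 ⟨w.concat huv.symm, ?_⟩
      intro z hz
      simp only [Walk.support_concat, List.concat_eq_append, List.mem_append, List.mem_singleton] at hz
      rcases hz with hz | rfl
      · exact hw z hz
      · exact huB.1
  have hH'H : H' ≤ H := by intro a b hab; exact hab.1
  have hchordH' : IsChordal H' := by
    intro n hn
    obtain ⟨m, rfl⟩ : ∃ m, n = m + 2 := ⟨n - 2, by omega⟩
    have hm : 2 ≤ m := by omega
    refine ⟨fun f => ?_⟩
    by_cases hcase : ∀ i j : Fin (m+2), H.Adj (f i) (f j) → (cycleGraph (m+2)).Adj i j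
    · exact (hHchordal (m+2) hn).false
        ⟨f.toEmbedding, fun {a b} => ⟨fun h => hcase a b h, fun h => (f.map_adj_iff.mpr h).1⟩⟩
    · push_neg at hcase
      obtain ⟨i0, j0, hHadj, hnotcyc⟩ := hcase
      have hnH' : ¬ H'.Adj (f i0) (f j0) := fun h => hnotcyc (f.map_adj_iff.mp h)
      have hcross : (f i0 ∈ A ∧ f j0 ∈ B) ∨ (f i0 ∈ B ∧ f j0 ∈ A) := by
        by_contra hc
        push_neg at hc
        exact hnH' ⟨hHadj, fun h => hc.1 h.1 h.2, fun h => hc.2 h.1 h.2⟩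
      have hS' : ∀ i j : Fin (m+2), i ≠ j → f i ∈ S → f j ∈ S →
          (cycleGraph (m+2)).Adj i j := by
        intro i j hij hiS hjS
        have hadjH : H.Adj (f i) (f j) := hKclique hiS.1 hjS.1 (f.injective.ne hij)
        exact f.map_adj_iff.mp
          ⟨hadjH, fun hc => hAS _ hc.1 hiS, fun hc => hc.1.1 hiS⟩
      have hstep' : ∀ i : Fin (m+2),
          ¬(f i ∈ A ∧ f (i+1) ∈ B) ∧ ¬(f i ∈ B ∧ f (i+1) ∈ A) := by
        intro i
        have hadjc : (cycleGraph (m+2)).Adj i (i+1) := by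
          rw [cycleGraph_adj]
          right
          exact add_sub_cancel_left i 1
        have h := f.map_adj_iff.mpr hadjc
        exact ⟨h.2.1, h.2.2⟩
      have hcover : ∀ w, w ∉ S → w ∉ A → w ∈ B := fun w h1 h2 => ⟨h1, h2⟩
      rcases hcross with ⟨h1, h2⟩ | ⟨h1, h2⟩
      · exact cycle_no_embed A B S hcover (fun w hw => hw.2) (fun w hw => hw.1) hAS hm f
          hS' hstep' i0 j0 h1 h2
      · exact cycle_no_embed A B S hcover (fun w hw => hw.2) (fun w hw => hw.1) hAS hm f
          hS' hstep' j0 i0 h2 h1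
  have hH'eq : H' = H := hmin H' hG'le hH'H hchordH'
  have hxyH : H.Adj x y := hKclique hx hy hxy
  rw [← hH'eq] at hxyH
  exact hxyH.2.1 ⟨hxA, ⟨hyS, hyA⟩⟩

end PMCAux

theorem stmt1 [Fintype V] (G : SimpleGraph V) (K : Set V) (hK : IsPMCtri G K) :
    ∀ x ∈ K, ∀ y ∈ K, x ≠ y → ¬ G.Adj x y →
      ∃ C : Set V, IsCompOf G K C ∧ (∃ u ∈ C, G.Adj u x) ∧ (∃ u ∈ C, G.Adj u y) := by
  classical
  obtain ⟨H, ⟨hGH, hHchordal, hmin⟩, hKclique, _⟩ := hK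
  intro x hx y hy hxy hnadj
  by_cases hyA : y ∈ PMCAux.walkSet G (K \ {x, y}) x
  · obtain ⟨p, hp⟩ := hyA
    have hwS : ∀ z ∈ p.bypass.support, z ∉ K \ {x, y} :=
      fun z hz => hp z (p.support_bypass_subset hz)
    have hwpath : p.bypass.IsPath := p.bypass_isPath
    obtain ⟨v1, hadj, q, heq⟩ :=
      (SimpleGraph.Walk.not_nil_iff).mp (SimpleGraph.Walk.not_nil_of_ne hxy (p := p.bypass))
    rw [heq] at hwS hwpath
    have hqpath : q.IsPath := ((SimpleGraph.Walk.cons_isPath_iff hadj q).mp hwpath).1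
    have hxq : x ∉ q.support := ((SimpleGraph.Walk.cons_isPath_iff hadj q).mp hwpath).2
    have hqS : ∀ z ∈ q.support, z ∉ K \ {x, y} := fun z hz => hwS z (by simp [hz])
    have hv1x : v1 ≠ x := hadj.ne'
    have hv1y : v1 ≠ y := by rintro rfl; exact hnadj hadj
    have hv1K : v1 ∉ K := by
      intro hk
      exact hqS v1 q.start_mem_support ⟨hk, by simp [hv1x, hv1y]⟩
    obtain ⟨v2, hady, r, heqr⟩ := (SimpleGraph.Walk.not_nil_iff).mp
      (SimpleGraph.Walk.not_nil_of_ne (Ne.symm hv1y) (p := q.reverse))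
    have hrpath : q.reverse.IsPath := hqpath.reverse
    rw [heqr] at hrpath
    have hyr : y ∉ r.support := ((SimpleGraph.Walk.cons_isPath_iff hady r).mp hrpath).2
    have hrsub : ∀ z ∈ r.support, z ∈ q.support := by
      intro z hz
      have h2 : z ∈ q.reverse.support := by rw [heqr]; simp [hz]
      rwa [SimpleGraph.Walk.support_reverse, List.mem_reverse] at h2
    have hrK : ∀ z ∈ r.support, z ∉ K := by
      intro z hz hk
      have hzq := hrsub z hz
      have hzx : z ≠ x := fun h => hxq (h ▸ hzq)
      have hzy : z ≠ y := fun h => hyr (h ▸ hz)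
      exact hqS z hzq ⟨hk, by simp [hzx, hzy]⟩
    have hv2C : v2 ∈ PMCAux.walkSet G K v1 := by
      refine ⟨r.reverse, ?_⟩
      intro z hz
      rw [SimpleGraph.Walk.support_reverse, List.mem_reverse] at hz
      exact hrK z hz
    exact ⟨PMCAux.walkSet G K v1, PMCAux.isCompOf_walkSet G K v1 hv1K,
      ⟨v1, ⟨SimpleGraph.Walk.nil, by intro z hz; simp at hz; subst hz; exact hv1K⟩, hadj.symm⟩,
      ⟨v2, hv2C, hady.symm⟩⟩
  · exact (PMCAux.main_case2 G H K hGH hHchordal hmin hKclique hx hy hxy hnadj hyA).elim
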